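/- If f : ℝ^n → ℝ is real-analytic and not identically zero, then the zero set {x : f(x) = 0} has Lebesgue measure zero. -/

import Mathlib

open MeasureTheory Filter

/-- Composition of an analytic function with an affine map is analytic. -/
lemma analyticOnNhd_comp_affine {E F : Type*} [NormedAddCommGroup E] [NormedSpace ℝ E]
    [NormedAddCommGroup F] [NormedSpace ℝ F]
    {g : F → ℝ} (hg : AnalyticOnNhd ℝ g Set.univ) (A : E →L[ℝ] F) (c : F) :
    AnalyticOnNhd ℝ (fun x => g (A x + c)) Set.univ :=
  hg.comp ((A.analyticOnNhd Set.univ).add analyticOnNhd_const) (Set.mapsTo_univ _ _)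

/-- 1D case: the zero set of a nonvanishing real-analytic function on `ℝ` is null. -/
lemma analytic_zero_set_measure_zero_dim1 (g : ℝ → ℝ)
    (hg : AnalyticOnNhd ℝ g Set.univ) (hne : ∃ t, g t ≠ 0) :
    volume {t : ℝ | g t = 0} = 0 := by
  obtain ⟨t₀, ht₀⟩ := hne
  set S : Set ℝ := {t : ℝ | g t = 0} with hS
  have hdisc : ∀ x : ℝ, ∀ᶠ z in nhdsWithin x {x}ᶜ, g z ≠ 0 := by
    intro x
    rcases (hg x trivial).eventually_eq_zero_or_eventually_ne_zero with h | h
    · exact absurd (hg.eqOn_zero_of_preconnected_of_eventuallyEq_zero isPreconnected_univ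
        (Set.mem_univ x) h (Set.mem_univ t₀)) ht₀
    · exact h
  have hdt : DiscreteTopology S := by
    rw [discreteTopology_subtype_iff]
    intro x hx
    have h1 : ∀ᶠ z in nhdsWithin x {x}ᶜ ⊓ Filter.principal S, g z ≠ 0 :=
      (hdisc x).filter_mono inf_le_left
    have h2 : ∀ᶠ z in nhdsWithin x {x}ᶜ ⊓ Filter.principal S, g z = 0 :=
      Filter.eventually_inf_principal.2 (Filter.Eventually.of_forall fun z hz => hz)
    have : ∀ᶠ z in nhdsWithin x {x}ᶜ ⊓ Filter.principal S, False :=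
      h1.mp (h2.mono fun z hz hz' => hz' hz)
    exact Filter.eventually_false_iff_eq_bot.mp this
  have hcount : S.Countable := by
    have : TopologicalSpace.SeparableSpace S := by infer_instance
    have : Countable S := (TopologicalSpace.separableSpace_iff_countable).1 this
    exact Set.countable_coe_iff.1 this
  exact hcount.measure_zero volume

/-- Decomposition of `Fin.cons` into a linear part plus constant. -/
lemma fin_cons_decomp (n : ℕ) (t : ℝ) (y : Fin n → ℝ) :
    (Fin.cons t y : Fin (n + 1) → ℝ)
      = t • (Fin.cons 1 0 : Fin (n + 1) → ℝ) + (Fin.cons 0 y : Fin (n + 1) → ℝ) := by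
  ext j
  refine Fin.cases ?_ (fun i => ?_) j <;> simp

/-- The linear map `y ↦ Fin.cons 0 y`. -/
noncomputable def consCLM (n : ℕ) : (Fin n → ℝ) →L[ℝ] (Fin (n + 1) → ℝ) :=
  ContinuousLinearMap.pi (fun i =>
    Fin.cases (0 : (Fin n → ℝ) →L[ℝ] ℝ) (fun j => ContinuousLinearMap.proj j) i)

lemma consCLM_apply (n : ℕ) (y : Fin n → ℝ) :
    consCLM n y = (Fin.cons 0 y : Fin (n + 1) → ℝ) := by
  ext j
  refine Fin.cases ?_ (fun i => ?_) j <;> simp [consCLM]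

/-- The linear map `t ↦ t • Fin.cons 1 0`. -/
noncomputable def oneCLM (n : ℕ) : ℝ →L[ℝ] (Fin (n + 1) → ℝ) :=
  (ContinuousLinearMap.id ℝ ℝ).smulRight (Fin.cons 1 0 : Fin (n + 1) → ℝ)

/-- Pi version, proved by induction on `n`. -/
lemma analytic_zero_set_measure_zero_pi : ∀ (n : ℕ) (g : (Fin n → ℝ) → ℝ),
    AnalyticOnNhd ℝ g Set.univ → (∃ x, g x ≠ 0) →
    volume {x : Fin n → ℝ | g x = 0} = 0 := by
  intro n
  induction n with
  | zero =>
    intro g hg ⟨x, hx⟩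
    have : {x : Fin 0 → ℝ | g x = 0} = ∅ := by
      ext y
      simp only [Set.mem_setOf_eq, Set.mem_empty_iff_false, iff_false]
      intro hy
      exact hx (by rwa [Subsingleton.elim x y])
    simp [this]
  | succ n IH =>
    intro g hg hne
    -- continuity and measurability of the zero set
    have hcont : Continuous g := by
      rw [← continuousOn_univ]; exact hg.continuousOn
    have hSm : MeasurableSet {x : Fin (n + 1) → ℝ | g x = 0} :=
      (isClosed_eq hcont continuous_const).measurableSet
    -- transfer to the product ℝ × (Fin n → ℝ)
    set e := MeasurableEquiv.piFinSuccAbove (fun _ : Fin (n + 1) => ℝ) 0 with he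
    have hmp : MeasurePreserving e volume volume :=
      volume_preserving_piFinSuccAbove (fun _ : Fin (n + 1) => ℝ) 0
    have hmain : volume {x : Fin (n + 1) → ℝ | g x = 0}
        = volume (e.symm ⁻¹' {x : Fin (n + 1) → ℝ | g x = 0}) :=
      ((MeasurePreserving.symm e hmp).measure_preimage hSm.nullMeasurableSet).symm
    rw [hmain]
    -- identify the preimage slices
    have hesymm : ∀ p : ℝ × (Fin n → ℝ), e.symm p = Fin.cons p.1 p.2 := by
      intro p
      show (Fin.insertNthEquiv (fun _ : Fin (n+1) => ℝ) 0) p = _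
      simp [Fin.insertNthEquiv, Fin.insertNth_zero']
    have hTm : MeasurableSet (e.symm ⁻¹' {x : Fin (n + 1) → ℝ | g x = 0}) :=
      e.symm.measurable hSm
    rw [show (volume : Measure (ℝ × (Fin n → ℝ)))
        = (volume : Measure ℝ).prod (volume : Measure (Fin n → ℝ)) from rfl]
    rw [Measure.measure_prod_null hTm]
    -- g is not identically zero along cons
    have hne' : ∃ (y : Fin n → ℝ) (t : ℝ), g (Fin.cons t y) ≠ 0 := by
      by_contra h
      push_neg at h
      obtain ⟨x, hx⟩ := hne
      exact hx (by simpa [Fin.cons_self_tail] using h (Fin.tail x) (x 0))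
    obtain ⟨y₀, t₀, hy₀⟩ := hne'
    -- the "bad" set of t is null
    have hbad : volume {t : ℝ | g (Fin.cons t y₀) = 0} = 0 := by
      apply analytic_zero_set_measure_zero_dim1
      · have := analyticOnNhd_comp_affine hg (oneCLM n) (Fin.cons 0 y₀)
        convert this using 2 with t
        rw [show (oneCLM n) t = t • (Fin.cons 1 0 : Fin (n+1) → ℝ) from rfl,
          ← fin_cons_decomp]
      · exact ⟨t₀, hy₀⟩
    -- conclude slice-wise
    have hbad' : ∀ᵐ t : ℝ, g (Fin.cons t y₀) ≠ 0 := by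
      rw [ae_iff]; simpa using hbad
    filter_upwards [hbad'] with t ht
    have hslice : Prod.mk t ⁻¹' (e.symm ⁻¹' {x : Fin (n + 1) → ℝ | g x = 0})
        = {y : Fin n → ℝ | g (Fin.cons t y) = 0} := by
      ext y
      simp [hesymm]
    rw [hslice]
    apply IH
    · have := analyticOnNhd_comp_affine hg (consCLM n) (Fin.cons t 0)
      convert this using 2 with y
      show g (Fin.cons t y) = g (consCLM n y + Fin.cons t (0 : Fin n → ℝ))
      congr 1
      rw [consCLM_apply]
      ext j
      refine Fin.cases ?_ (fun i => ?_) j <;> simp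
    · exact ⟨y₀, ht⟩

/-- If `f : ℝ^n → ℝ` is real-analytic on all of `ℝ^n` and not identically zero,
then its zero set has Lebesgue measure zero. -/
theorem analytic_zero_set_measure_zero (n : ℕ)
    (f : EuclideanSpace ℝ (Fin n) → ℝ)
    (hf : AnalyticOnNhd ℝ f Set.univ)
    (hne : ∃ x, f x ≠ 0) :
    MeasureTheory.volume {x : EuclideanSpace ℝ (Fin n) | f x = 0} = 0 := by
  set L : (Fin n → ℝ) ≃L[ℝ] EuclideanSpace ℝ (Fin n) := (EuclideanSpace.equiv (Fin n) ℝ).symm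
  set F : (Fin n → ℝ) → ℝ := fun y => f (L y) with hF
  have hFa : AnalyticOnNhd ℝ F Set.univ :=
    hf.comp ((L : (Fin n → ℝ) →L[ℝ] EuclideanSpace ℝ (Fin n)).analyticOnNhd Set.univ)
      (Set.mapsTo_univ _ _)
  have hFne : ∃ y, F y ≠ 0 := by
    obtain ⟨x, hx⟩ := hne
    exact ⟨L.symm x, by simpa [hF] using hx⟩
  have h0 : volume {y : Fin n → ℝ | F y = 0} = 0 :=
    analytic_zero_set_measure_zero_pi n F hFa hFne
  have hFcont : Continuous F := by
    rw [← continuousOn_univ]; exact hFa.continuousOn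
  have hAm : MeasurableSet {y : Fin n → ℝ | F y = 0} :=
    (isClosed_eq hFcont continuous_const).measurableSet
  have hmp := EuclideanSpace.volume_preserving_symm_measurableEquiv_toLp (Fin n)
  have key : MeasureTheory.volume {x : EuclideanSpace ℝ (Fin n) | f x = 0}
      = volume ((MeasurableEquiv.toLp 2 (Fin n → ℝ)).symm ⁻¹' {y : Fin n → ℝ | F y = 0}) := by
    congr 1
  rw [key, hmp.measure_preimage hAm.nullMeasurableSet, h0]
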